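/- Let Ω be a finite nonempty set and τ₁, τ₂, τ₃ permutations of Ω satisfying (T1), (T2), (T3), (T4), and additionally τ₁³ = τ₂³ = τ₃³ = 1. Then there exists a map c : Ω → ℤ/3ℤ such that c(τᵢ(x)) = c(x) + 1 for all x ∈ Ω and all i ∈ {1,2,3}. -/

import Mathlib

namespace ThreeColouringAux

variable {Ω : Type*}

def ev (T : ZMod 3 → Equiv.Perm Ω) (l : List (ZMod 3)) : Equiv.Perm Ω :=
  (l.map T).prod

@[simp] lemma ev_nil (T : ZMod 3 → Equiv.Perm Ω) : ev T [] = 1 := rfl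

@[simp] lemma ev_cons (T : ZMod 3 → Equiv.Perm Ω) (a : ZMod 3) (l : List (ZMod 3)) :
    ev T (a :: l) = T a * ev T l := by simp [ev]

@[simp] lemma ev_append (T : ZMod 3 → Equiv.Perm Ω) (s t : List (ZMod 3)) :
    ev T (s ++ t) = ev T s * ev T t := by simp [ev]

def Bad (T : ZMod 3 → Equiv.Perm Ω) (l : List (ZMod 3)) : Prop :=
  ∃ x, ev T l x = x

lemma bad_congr {T : ZMod 3 → Equiv.Perm Ω} {l₁ l₂ : List (ZMod 3)}
    (h : ev T l₁ = ev T l₂) : Bad T l₁ → Bad T l₂ := by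
  rintro ⟨x, hx⟩; exact ⟨x, by rw [← h]; exact hx⟩

lemma bad_swap {T : ZMod 3 → Equiv.Perm Ω} {s t : List (ZMod 3)}
    (h : Bad T (s ++ t)) : Bad T (t ++ s) := by
  rcases h with ⟨x, hx⟩
  refine ⟨ev T t x, ?_⟩
  simp only [ev_append, Equiv.Perm.mul_apply] at hx ⊢
  rw [hx]

section Rel

variable {T : ZMod 3 → Equiv.Perm Ω}
variable (hrel : ∀ b : ZMod 3, T (b + 1) * T b = T (b + 2) * T (b + 2))
variable (h3 : ∀ i : ZMod 3, T i ^ 3 = 1)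

include h3 in
lemma triple_mul (q : ZMod 3) : T q * (T q * T q) = 1 := by
  have h := h3 q
  rw [pow_succ, pow_two, mul_assoc] at h
  exact h

include h3 in
/-- Deleting a cube at the end of a word. -/
lemma ev_triple (u : List (ZMod 3)) (q : ZMod 3) :
    ev T (u ++ [q, q, q]) = ev T u := by
  simp only [ev_append, ev_cons, ev_nil, mul_one]
  rw [triple_mul h3, mul_one]

include h3 in
lemma bad_stop {u : List (ZMod 3)} {q : ZMod 3}
    (h : Bad T ((u ++ [q]) ++ [q, q])) : Bad T u := by
  refine bad_congr ?_ h
  rw [show (u ++ [q]) ++ [q, q] = u ++ [q, q, q] by simp]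
  exact ev_triple h3 u q

include hrel in
/-- One step of pair-shifting: word `w ++ v ++ [z,p,p]` with `z ≠ p` becomes
`(z-1) :: w ++ v ++ [p-1, p-1]`. -/
lemma step {z p : ZMod 3} (hzp : z ≠ p) (w v : List (ZMod 3))
    (h : Bad T (w ++ v ++ [z, p, p])) :
    Bad T (((z - 1) :: w) ++ v ++ [p - 1, p - 1]) := by
  have hsub : ∀ q : ZMod 3, q - 1 = q + 2 := by decide
  rcases (by decide : ∀ z p : ZMod 3, z ≠ p → z = p + 1 ∨ z = p + 2) z p hzp with h1 | h2
  · -- z = p + 1 : flip (z, p) ↦ (p+2, p+2), emit trailing p to the front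
    subst h1
    have e : ev T (w ++ v ++ [p + 1, p, p]) = ev T ((w ++ v ++ [p + 2, p + 2]) ++ [p]) := by
      simp only [ev_append, ev_cons, ev_nil, mul_one, mul_assoc]
      congr 2
      rw [← mul_assoc, ← mul_assoc, hrel p]
    have h' := bad_swap (bad_congr e h)
    rw [show p + 1 - 1 = p from by ring, hsub p]
    simpa [List.append_assoc] using h'
  · -- z = p + 2 : rewrite the pair (p,p) = (p+2)(p+1), emit trailing p+1 to the front
    subst h2
    have e : ev T (w ++ v ++ [p + 2, p, p]) =
        ev T ((w ++ v ++ [p + 2, p + 2]) ++ [p + 1]) := by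
      simp only [ev_append, ev_cons, ev_nil, mul_one, mul_assoc]
      congr 2
      have key : T p * T p = T (p + 2) * T (p + 1) := by
        have h' := hrel (p + 1)
        rw [show p + 1 + 1 = p + 2 from by ring,
          (by decide : ∀ p : ZMod 3, p + 1 + 2 = p) p] at h'
        exact h'.symm
      rw [key]
    have h' := bad_swap (bad_congr e h)
    rw [(by decide : ∀ p : ZMod 3, p + 2 - 1 = p + 1) p, hsub p]
    simpa [List.append_assoc] using h'

include hrel h3 in
/-- One lap of pair-shifting around the cyclic word. -/
lemma lap (v : List (ZMod 3)) : ∀ (w : List (ZMod 3)) (p : ZMod 3),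
    Bad T (w ++ v ++ [p, p]) →
    (∃ l', Bad T l' ∧ l'.length + 3 = w.length + v.length + 2) ∨
      Bad T (v.map (fun a => a - 1) ++ w ++
        [p - (v.length : ZMod 3), p - (v.length : ZMod 3)]) := by
  induction v using List.reverseRecOn with
  | nil =>
    intro w p h
    right
    simpa using h
  | append_singleton v' z ih =>
    intro w p h
    by_cases hz : z = p
    · -- triple found: delete it
      subst hz
      left
      have h' : Bad T (((w ++ v') ++ [z]) ++ [z, z]) := by
        refine bad_congr ?_ h
        simp
      exact ⟨w ++ v', bad_stop h3 h', by simp; omega⟩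
    · have h' : Bad T (w ++ v' ++ [z, p, p]) := by
        refine bad_congr ?_ h
        simp
      have h'' := step hrel hz w v' h'
      rcases ih ((z - 1) :: w) (p - 1) h'' with ⟨l', hb, hlen⟩ | hb
      · left
        exact ⟨l', hb, by simp at hlen ⊢; omega⟩
      · right
        have ecast : p - ((v'.length + 1 : ℕ) : ZMod 3) = p - 1 - (v'.length : ZMod 3) := by
          push_cast; ring
        simp only [List.map_append, List.length_append, List.map_cons, List.map_nil,
          List.length_cons, List.length_map, List.length_nil] at hb ⊢
        rw [show ((v'.length + 1 : ℕ) : ZMod 3) = (v'.length : ZMod 3) + 1 by push_cast; ring]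
        rw [show p - ((v'.length : ZMod 3) + 1) = p - 1 - (v'.length : ZMod 3) by ring]
        simpa [List.append_assoc] using hb

include hrel h3 in
/-- Within three laps the pair meets a matching letter, so the word length drops by 3. -/
lemma three_laps (u : List (ZMod 3)) (z p : ZMod 3)
    (hn : ((u.length : ZMod 3) + 1) + 2 ≠ 0)
    (h : Bad T ((u ++ [z]) ++ [p, p])) :
    ∃ l', Bad T l' ∧ l'.length = u.length := by
  set m : ZMod 3 := (u.length : ZMod 3) + 1 with hm
  have hlen1 : (((u ++ [z]).length : ℕ) : ZMod 3) = m := by simp [hm]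
  rcases (by decide : ∀ z p m : ZMod 3, m + 2 ≠ 0 →
      (z = p ∨ z - 1 = p - m ∨ z - 1 - 1 = p - m - m)) z p m hn with h0 | h1 | h2
  · subst h0
    exact ⟨u, bad_stop h3 h, rfl⟩
  · -- stop after one lap
    have h' : Bad T ([] ++ (u ++ [z]) ++ [p, p]) := by simpa using h
    rcases lap hrel h3 (u ++ [z]) [] p h' with ⟨l', hb, hlen⟩ | hb
    · exact ⟨l', hb, by simp at hlen; omega⟩
    · rw [hlen1] at hb
      simp only [List.map_append, List.map_cons, List.map_nil, List.append_nil] at hb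
      rw [h1] at hb
      exact ⟨u.map (fun a => a - 1), bad_stop h3 hb, by simp⟩
  · -- stop after two laps
    have h' : Bad T ([] ++ (u ++ [z]) ++ [p, p]) := by simpa using h
    rcases lap hrel h3 (u ++ [z]) [] p h' with ⟨l', hb, hlen⟩ | hb
    · exact ⟨l', hb, by simp at hlen; omega⟩
    · rw [hlen1] at hb
      simp only [List.append_nil] at hb
      have h2' : Bad T ([] ++ ((u ++ [z]).map (fun a => a - 1)) ++ [p - m, p - m]) := by
        simpa using hb
      rcases lap hrel h3 ((u ++ [z]).map (fun a => a - 1)) [] (p - m) h2' with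
        ⟨l', hb2, hlen⟩ | hb2
      · exact ⟨l', hb2, by simp at hlen; omega⟩
      · have hlen2 : ((((u ++ [z]).map (fun a => a - 1)).length : ℕ) : ZMod 3) = m := by
          simpa using hlen1
        rw [hlen2] at hb2
        simp only [List.map_append, List.map_cons, List.map_nil, List.append_nil] at hb2
        rw [h2] at hb2
        exact ⟨(u.map (fun a => a - 1)).map (fun a => a - 1), bad_stop h3 hb2, by simp⟩

lemma find_pattern (l : List (ZMod 3)) :
    (∃ u a b v, l = u ++ a :: b :: v ∧ (a = b ∨ a = b + 1)) ∨
      List.Chain' (fun x y => y = x + 1) l := by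
  induction l with
  | nil => right; exact List.isChain_nil
  | cons a t ih =>
    match t, ih with
    | [], _ => right; exact List.isChain_singleton _
    | b :: t', ih =>
      by_cases hab : a = b ∨ a = b + 1
      · left; exact ⟨[], a, b, t', by simp, hab⟩
      · push_neg at hab
        have hba : b = a + 1 :=
          (by decide : ∀ a b : ZMod 3, a ≠ b → a ≠ b + 1 → b = a + 1) a b hab.1 hab.2
        rcases ih with ⟨u, a', b', v, heq, hc⟩ | hch
        · left; exact ⟨a :: u, a', b', v, by rw [heq]; simp, hc⟩
        · right; exact List.isChain_cons_cons.2 ⟨hba, hch⟩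

lemma chain_last : ∀ (t : List (ZMod 3)) (a z : ZMod 3),
    List.Chain' (fun x y => y = x + 1) (a :: (t ++ [z])) →
    z = a + (t.length : ZMod 3) + 1 := by
  intro t
  induction t with
  | nil =>
    intro a z hc
    rw [List.nil_append, List.Chain', List.isChain_cons_cons] at hc
    rw [hc.1]
    simp
  | cons b t' ih =>
    intro a z hc
    rw [List.cons_append, List.Chain', List.isChain_cons_cons] at hc
    have h2 := ih b z hc.2
    rw [h2, hc.1]
    simp only [List.length_cons]
    push_cast
    ring

include hrel in
lemma pairify (l : List (ZMod 3)) (hlen : 2 ≤ l.length)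
    (hcast : ((l.length : ℕ) : ZMod 3) ≠ 0) (h : Bad T l) :
    ∃ u q, Bad T (u ++ [q, q]) ∧ u.length + 2 = l.length := by
  rcases find_pattern l with ⟨u, a, b, v, heq, hab⟩ | hch
  · subst heq
    have h' : Bad T ((v ++ u) ++ [a, b]) := by
      have h0 : Bad T ((u ++ [a, b]) ++ v) := by
        refine bad_congr ?_ h
        simp
      refine bad_congr ?_ (bad_swap h0)
      simp
    rcases hab with rfl | hab1
    · refine ⟨v ++ u, a, h', ?_⟩
      simp only [List.length_append, List.length_cons]
      omega
    · subst hab1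
      have h'' : Bad T ((v ++ u) ++ [b + 2, b + 2]) := by
        refine bad_congr ?_ h'
        simp only [ev_append, ev_cons, ev_nil, mul_one]
        rw [hrel b]
      refine ⟨v ++ u, b + 2, h'', ?_⟩
      simp only [List.length_append, List.length_cons]
      omega
  · cases l with
    | nil => simp at hlen
    | cons a t =>
      rcases List.eq_nil_or_concat t with rfl | ⟨t', z, ht⟩
      · simp at hlen
      · rw [List.concat_eq_append] at ht
        subst ht
        have hz : z = a + ((t'.length : ℕ) : ZMod 3) + 1 := chain_last t' a z hch
        have h1 : Bad T (t' ++ [z, a]) := by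
          have h0 : Bad T ((t' ++ [z]) ++ [a]) :=
            bad_swap (show Bad T ([a] ++ (t' ++ [z])) from h)
          refine bad_congr ?_ h0
          simp
        have hd : ((t'.length : ℕ) : ZMod 3) + 2 ≠ 0 := by
          intro hh
          apply hcast
          simp only [List.length_cons, List.length_append, List.length_nil]
          push_cast
          rw [show ((t'.length : ZMod 3) + 1 + 1) = (t'.length : ZMod 3) + 2 by ring]
          exact hh
        rcases (by decide : ∀ d : ZMod 3, d + 2 ≠ 0 → d = 0 ∨ d = 2)
            ((t'.length : ℕ) : ZMod 3) hd with hd0 | hd2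
        · rw [hd0, show a + 0 + 1 = a + 1 from by ring] at hz
          subst hz
          have h2 : Bad T (t' ++ [a + 2, a + 2]) := by
            refine bad_congr ?_ h1
            simp only [ev_append, ev_cons, ev_nil, mul_one]
            rw [hrel a]
          refine ⟨t', a + 2, h2, ?_⟩
          simp only [List.length_cons, List.length_append, List.length_nil]
          try omega
        · rw [hd2, (by decide : ∀ q : ZMod 3, q + 2 + 1 = q) a] at hz
          subst hz
          refine ⟨t', z, h1, ?_⟩
          simp only [List.length_cons, List.length_append, List.length_nil]
          try omega

include h3 in
lemma bad_pair (hfpf : ∀ (i : ZMod 3) (x : Ω), T i x ≠ x) (q : ZMod 3) :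
    ¬ Bad T [q, q] := by
  rintro ⟨x, hx⟩
  simp only [ev_cons, ev_nil, mul_one, Equiv.Perm.mul_apply] at hx
  have h2 : T q (T q (T q x)) = T q x := congrArg (T q) hx
  have h3' : T q (T q (T q x)) = x := by
    have hh := congrArg (fun g : Equiv.Perm Ω => g x) (triple_mul h3 q)
    simpa [Equiv.Perm.mul_apply] using hh
  exact hfpf q x (h2.symm.trans h3')

include hrel h3 in
lemma main_lemma (hfpf : ∀ (i : ZMod 3) (x : Ω), T i x ≠ x) :
    ∀ (n : ℕ) (l : List (ZMod 3)), l.length = n → ((n : ℕ) : ZMod 3) ≠ 0 →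
      ¬ Bad T l := by
  intro n
  induction n using Nat.strong_induction_on with
  | _ n ih =>
    intro l hl hn hb
    rcases l with _ | ⟨i, l₀⟩
    · rw [← hl] at hn; simp at hn
    rcases Nat.lt_or_ge l₀.length 1 with h1 | h1
    · have hnil : l₀ = [] := List.eq_nil_of_length_eq_zero (by omega)
      subst hnil
      rcases hb with ⟨x, hx⟩
      simp only [ev_cons, ev_nil, mul_one] at hx
      exact hfpf i x hx
    · have hlen2 : 2 ≤ (i :: l₀).length := by simp; omega
      obtain ⟨u, q, hbq, hul⟩ := pairify hrel (i :: l₀) hlen2 (by rw [hl]; exact hn) hb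
      rcases List.eq_nil_or_concat u with rfl | ⟨u', z, hu⟩
      · exact bad_pair h3 hfpf q (by simpa using hbq)
      · rw [List.concat_eq_append] at hu
        subst hu
        have hn3 : n = u'.length + 3 := by
          simp only [List.length_append, List.length_cons, List.length_nil] at hul
          simp only [List.length_cons] at hl
          omega
        have hcast3 : ((u'.length : ZMod 3) + 1) + 2 ≠ 0 := by
          intro hh
          apply hn
          rw [hn3]
          push_cast
          rw [show ((u'.length : ZMod 3) + 3 = (u'.length : ZMod 3) + 1 + 2) from by ring]
          exact hh
        obtain ⟨l', hb', hl'⟩ := three_laps hrel h3 u' z q hcast3 hbq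
        refine ih l'.length (by rw [hl', hn3]; omega) l' rfl ?_ hb'
        rw [hl']
        intro hh
        apply hn
        rw [hn3]
        push_cast
        rw [show ((3 : ZMod 3) = 0) from by decide, hh]
        ring

include h3 in
lemma ev_inv_word (l : List (ZMod 3)) :
    ∃ l', ev T l' = (ev T l)⁻¹ ∧ l'.length = 2 * l.length := by
  induction l with
  | nil => exact ⟨[], by simp, by simp⟩
  | cons i l ih =>
    obtain ⟨l', hl', hlen⟩ := ih
    refine ⟨l' ++ [i, i], ?_, by simp [hlen]; omega⟩
    have hti : (T i)⁻¹ = T i * T i := inv_eq_of_mul_eq_one_right (triple_mul h3 i)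
    simp only [ev_append, ev_cons, ev_nil, mul_one, mul_inv_rev, hl', hti, mul_assoc]

end Rel

end ThreeColouringAux

open ThreeColouringAux in
theorem exists_three_colouring
    {Ω : Type*} [Finite Ω] [Nonempty Ω] (τ : Fin 3 → Equiv.Perm Ω)
    (hT1 : ∀ x : Ω, τ 2 (τ 1 (τ 0 x)) = x)
    (hT2 : ∀ i j : Fin 3, i ≠ j → ∀ x y : Ω,
      (τ i).SameCycle x y → (τ j).SameCycle x y → x = y)
    (hT3 : ∀ i : Fin 3, ∀ x : Ω, τ i x ≠ x)
    (hT4 : ∀ x y : Ω, ∃ g ∈ Subgroup.closure {τ 0, τ 1, τ 2}, g x = y)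
    (hcube : ∀ i : Fin 3, τ i ^ 3 = 1) :
    ∃ c : Ω → ZMod 3, ∀ i : Fin 3, ∀ x : Ω, c (τ i x) = c x + 1 := by
  classical
  set T : ZMod 3 → Equiv.Perm Ω := fun i => τ ⟨i.val, i.val_lt⟩ with hT
  have e : ∀ (i : ZMod 3) (j : Fin 3), i.val = j.val → T i = τ j := by
    intro i j h
    rw [hT]
    exact congrArg τ (Fin.ext h)
  have h3 : ∀ i : ZMod 3, T i ^ 3 = 1 := fun i => hcube _
  have hfpf : ∀ (i : ZMod 3) (x : Ω), T i x ≠ x := fun i x => hT3 _ x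
  -- group relations
  have hABC : τ 2 * τ 1 * τ 0 = 1 := by
    ext x
    simpa [Equiv.Perm.mul_apply] using hT1 x
  have hinv : ∀ i : Fin 3, (τ i)⁻¹ = τ i * τ i := by
    intro i
    refine inv_eq_of_mul_eq_one_right ?_
    have h := hcube i
    rw [pow_succ, pow_two, mul_assoc] at h
    exact h
  have h1 : τ 2 * (τ 1 * τ 0) = 1 := by rw [← mul_assoc]; exact hABC
  have hBA : τ 1 * τ 0 = (τ 2)⁻¹ := eq_inv_of_mul_eq_one_right h1
  have hCB : τ 2 * τ 1 = (τ 0)⁻¹ := eq_inv_of_mul_eq_one_left hABC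
  have hC : τ 2 = (τ 1 * τ 0)⁻¹ := by rw [hBA, inv_inv]
  have hACB : τ 0 * τ 2 * τ 1 = 1 := by rw [hC]; group
  have hAC : τ 0 * τ 2 = (τ 1)⁻¹ := eq_inv_of_mul_eq_one_left hACB
  have r1 : τ 1 * τ 0 = τ 2 * τ 2 := by rw [hBA, hinv 2]
  have r2 : τ 2 * τ 1 = τ 0 * τ 0 := by rw [hCB, hinv 0]
  have r3 : τ 0 * τ 2 = τ 1 * τ 1 := by rw [hAC, hinv 1]
  have hrel : ∀ b : ZMod 3, T (b + 1) * T b = T (b + 2) * T (b + 2) := by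
    intro b
    rcases (by decide : ∀ b : ZMod 3, b = 0 ∨ b = 1 ∨ b = 2) b with rfl | rfl | rfl
    · rw [e (0 + 1) 1 (by decide), e 0 0 (by decide), e (0 + 2) 2 (by decide)]
      exact r1
    · rw [e (1 + 1) 2 (by decide), e 1 1 (by decide), e (1 + 2) 0 (by decide)]
      exact r2
    · rw [e (2 + 1) 0 (by decide), e 2 2 (by decide), e (2 + 2) 1 (by decide)]
      exact r3
  -- every element of the closure is a word
  have hword : ∀ g ∈ Subgroup.closure ({τ 0, τ 1, τ 2} : Set (Equiv.Perm Ω)),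
      ∃ l : List (ZMod 3), ev T l = g := by
    intro g hg
    induction hg using Subgroup.closure_induction with
    | mem g hgmem =>
      simp only [Set.mem_insert_iff, Set.mem_singleton_iff] at hgmem
      rcases hgmem with rfl | rfl | rfl
      · exact ⟨[0], by simp [e 0 0 (by decide)]⟩
      · exact ⟨[1], by simp [e 1 1 (by decide)]⟩
      · exact ⟨[2], by simp [e 2 2 (by decide)]⟩
    | one => exact ⟨[], by simp⟩
    | mul a b ha hb iha ihb =>
      obtain ⟨la, hla⟩ := iha
      obtain ⟨lb, hlb⟩ := ihb
      exact ⟨la ++ lb, by rw [ev_append, hla, hlb]⟩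
    | inv a ha iha =>
      obtain ⟨la, hla⟩ := iha
      obtain ⟨l', hl', _⟩ := ev_inv_word h3 la
      exact ⟨l', by rw [hl', hla]⟩
  -- words from the base point
  obtain ⟨x₀⟩ := ‹Nonempty Ω›
  have hex : ∀ x : Ω, ∃ l : List (ZMod 3), ev T l x₀ = x := by
    intro x
    obtain ⟨g, hg, hgx⟩ := hT4 x₀ x
    obtain ⟨l, hl⟩ := hword g hg
    exact ⟨l, by rw [hl]; exact hgx⟩
  choose w hw using hex
  refine ⟨fun x => ((w x).length : ZMod 3), ?_⟩
  intro i x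
  have hiT : T ((i.val : ℕ) : ZMod 3) = τ i := by
    refine e _ i ?_
    simp [ZMod.val_natCast, Nat.mod_eq_of_lt i.isLt]
  have h1' : ev T ((((i.val : ℕ) : ZMod 3)) :: (w x)) x₀ = τ i x := by
    rw [ev_cons, Equiv.Perm.mul_apply, hw x, hiT]
  obtain ⟨binv, hbinv, hblen⟩ := ev_inv_word h3 (w (τ i x))
  have hfix : ev T (binv ++ ((((i.val : ℕ) : ZMod 3)) :: (w x))) x₀ = x₀ := by
    rw [ev_append, Equiv.Perm.mul_apply, h1', hbinv, Equiv.Perm.inv_def,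
      Equiv.symm_apply_eq]
    exact (hw (τ i x)).symm
  have hlen0 : (((binv ++ ((((i.val : ℕ) : ZMod 3)) :: (w x))).length : ℕ) : ZMod 3) = 0 := by
    by_contra hne
    exact main_lemma hrel h3 hfpf _ _ rfl hne ⟨x₀, hfix⟩
  simp only [List.length_append, List.length_cons, hblen] at hlen0
  push_cast at hlen0
  exact (by decide : ∀ A B : ZMod 3, 2 * B + (A + 1) = 0 → B = A + 1)
    ((w x).length : ZMod 3) ((w (τ i x)).length : ZMod 3) hlen0
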